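/- Monotone dynamics preserve super- and subsolutions: fix an integer I ≥ 1, flux functions A_i : ℝ × ℝ → ℝ for i = 0,...,I with A_0 ≡ 0 and A_I ≡ 0, each A_i continuously differentiable with ∂₁A_i ≥ 0 and ∂₂A_i ≤ 0 everywhere, and f ∈ ℝ^I. Suppose u = (u_1,...,u_I) : [0,∞) → ℝ^I is continuously differentiable and solves, for all t ≥ 0 and i = 1,...,I, u_i'(t) + u_i(t) + A_i(u_i(t), u_{i+1}(t)) − A_{i−1}(u_{i−1}(t), u_i(t)) = f_i (with the conventions A_0 = A_I = 0 so boundary terms vanish). If u(0) is a supersolution, i.e. u_i(0) + A_i(u_i(0), u_{i+1}(0)) − A_{i−1}(u_{i−1}(0), u_i(0)) ≥ f_i for all i, then each map t ↦ u_i(t) is nonincreasing on [0,∞), and in particular u(t) is a supersolution for all t ≥ 0. Symmetrically, if u(0) is a subsolution (the reverse inequalities hold), then each t ↦ u_i(t) is nondecreasing and u(t) remains a subsolution. -/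

import Mathlib

open Set Filter Topology

/-- Pigeonhole for frequently: if eventually some index in a finset satisfies `p`,
then some index satisfies `p` frequently. -/
lemma freq_of_eventually_exists {α ι : Type*} {l : Filter α} [l.NeBot] {s : Finset ι}
    {p : ι → α → Prop} (h : ∀ᶠ x in l, ∃ i ∈ s, p i x) : ∃ i ∈ s, ∃ᶠ x in l, p i x := by
  by_contra hc
  push_neg at hc
  have h2 : ∀ᶠ x in l, ∀ i ∈ s, ¬ p i x := (Filter.eventually_all_finset s).2 hc
  rcases (h2.and h).exists with ⟨x, h1, i, hi, h3⟩
  exact h1 i hi h3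

lemma clm_expand (L : ℝ × ℝ →L[ℝ] ℝ) (a b : ℝ) : L (a, b) = a * L (1, 0) + b * L (0, 1) := by
  have h : ((a, b) : ℝ × ℝ) = a • ((1 : ℝ), (0 : ℝ)) + b • ((0 : ℝ), (1 : ℝ)) := by
    simp [Prod.ext_iff]
  rw [h, map_add, map_smul, map_smul, smul_eq_mul, smul_eq_mul]

lemma hasDerivAt_partial1 {A : ℝ → ℝ → ℝ} (h : ContDiff ℝ 1 (fun p : ℝ × ℝ => A p.1 p.2))
    (x y : ℝ) :
    HasDerivAt (fun s => A s y)
      (fderiv ℝ (fun p : ℝ × ℝ => A p.1 p.2) (x, y) ((1 : ℝ), (0 : ℝ))) x := by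
  have hF := ((h.differentiable one_ne_zero) (x, y)).hasFDerivAt
  have := hF.comp_hasDerivAt x ((hasDerivAt_id x).prodMk (hasDerivAt_const x y))
  simpa [Function.comp_def] using this

lemma hasDerivAt_partial2 {A : ℝ → ℝ → ℝ} (h : ContDiff ℝ 1 (fun p : ℝ × ℝ => A p.1 p.2))
    (x y : ℝ) :
    HasDerivAt (fun s => A x s)
      (fderiv ℝ (fun p : ℝ × ℝ => A p.1 p.2) (x, y) ((0 : ℝ), (1 : ℝ))) y := by
  have hF := ((h.differentiable one_ne_zero) (x, y)).hasFDerivAt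
  have := hF.comp_hasDerivAt y ((hasDerivAt_const y x).prodMk (hasDerivAt_id y))
  simpa [Function.comp_def] using this

/-- Core lemma: the maximum of the positive parts of the derivatives stays zero, i.e.
starting from a supersolution all components have nonpositive time-derivative. -/
lemma core_nonpos
    (I : ℕ) (hI : 1 ≤ I)
    (A : ℕ → ℝ → ℝ → ℝ) (f : ℕ → ℝ)
    (hA0 : ∀ x y : ℝ, A 0 x y = 0) (hAI : ∀ x y : ℝ, A I x y = 0)
    (hAC1 : ∀ i, ContDiff ℝ 1 (fun p : ℝ × ℝ => A i p.1 p.2))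
    (hA1 : ∀ i (x y : ℝ), 0 ≤ deriv (fun s => A i s y) x)
    (hA2 : ∀ i (x y : ℝ), deriv (fun s => A i x s) y ≤ 0)
    (u u' : ℕ → ℝ → ℝ)
    (hu : ∀ i, ∀ t : ℝ, 0 ≤ t → HasDerivWithinAt (u i) (u' i t) (Set.Ici 0) t)
    (hu' : ∀ i, ContinuousOn (u' i) (Set.Ici 0))
    (hode : ∀ i ∈ Finset.Icc 1 I, ∀ t : ℝ, 0 ≤ t →
      u' i t + u i t + A i (u i t) (u (i + 1) t) - A (i - 1) (u (i - 1) t) (u i t)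
        = f i)
    (hsup : ∀ i ∈ Finset.Icc 1 I,
        u i 0 + A i (u i 0) (u (i + 1) 0) - A (i - 1) (u (i - 1) 0) (u i 0) ≥ f i) :
    ∀ t : ℝ, 0 ≤ t → ∀ i ∈ Finset.Icc 1 I, u' i t ≤ 0 := by
  classical
  set s : Finset ℕ := Finset.Icc 1 I with hs
  have h1s : 1 ∈ s := by simp [hs, Finset.mem_Icc, hI]
  have hne : s.Nonempty := ⟨1, h1s⟩
  set F : ℕ → ℝ × ℝ → ℝ := fun i p => A i p.1 p.2 with hF
  -- partial derivative signs
  have hsgn1 : ∀ i (x y : ℝ), 0 ≤ fderiv ℝ (F i) (x, y) ((1 : ℝ), (0 : ℝ)) := by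
    intro i x y
    have := (hasDerivAt_partial1 (hAC1 i) x y).deriv
    rw [← this]; exact hA1 i x y
  have hsgn2 : ∀ i (x y : ℝ), fderiv ℝ (F i) (x, y) ((0 : ℝ), (1 : ℝ)) ≤ 0 := by
    intro i x y
    have := (hasDerivAt_partial2 (hAC1 i) x y).deriv
    rw [← this]; exact hA2 i x y
  have hF0 : ∀ p : ℝ × ℝ, fderiv ℝ (F 0) p = 0 := by
    intro p
    have : F 0 = fun _ : ℝ × ℝ => (0 : ℝ) := funext fun q => hA0 q.1 q.2
    rw [this]; exact fderiv_const_apply 0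
  have hFI : ∀ p : ℝ × ℝ, fderiv ℝ (F I) p = 0 := by
    intro p
    have : F I = fun _ : ℝ × ℝ => (0 : ℝ) := funext fun q => hAI q.1 q.2
    rw [this]; exact fderiv_const_apply 0
  -- the derivative of u' i
  set D : ℕ → ℝ → ℝ := fun i t =>
    - u' i t - (fderiv ℝ (F i) (u i t, u (i + 1) t)) (u' i t, u' (i + 1) t)
      + (fderiv ℝ (F (i - 1)) (u (i - 1) t, u i t)) (u' (i - 1) t, u' i t) with hD
  have hGeq : ∀ i ∈ s, ∀ τ : ℝ, 0 ≤ τ →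
      u' i τ = f i - u i τ - A i (u i τ) (u (i + 1) τ)
        + A (i - 1) (u (i - 1) τ) (u i τ) := by
    intro i hi τ hτ
    have := hode i hi τ hτ
    linarith
  have hDerivD : ∀ i ∈ s, ∀ t : ℝ, 0 ≤ t →
      HasDerivWithinAt (u' i) (D i t) (Set.Ici 0) t := by
    intro i hi t ht
    have hFd : ∀ j (p : ℝ × ℝ), HasFDerivAt (F j) (fderiv ℝ (F j) p) p :=
      fun j p => (((hAC1 j).differentiable one_ne_zero) p).hasFDerivAt
    have hA_t : HasDerivWithinAt (fun τ => A i (u i τ) (u (i + 1) τ))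
        ((fderiv ℝ (F i) (u i t, u (i + 1) t)) (u' i t, u' (i + 1) t)) (Set.Ici 0) t := by
      have := (hFd i (u i t, u (i + 1) t)).comp_hasDerivWithinAt t
        ((hu i t ht).prodMk (hu (i + 1) t ht))
      simpa [Function.comp_def, hF] using this
    have hB_t : HasDerivWithinAt (fun τ => A (i - 1) (u (i - 1) τ) (u i τ))
        ((fderiv ℝ (F (i - 1)) (u (i - 1) t, u i t)) (u' (i - 1) t, u' i t))
        (Set.Ici 0) t := by
      have := (hFd (i - 1) (u (i - 1) t, u i t)).comp_hasDerivWithinAt t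
        ((hu (i - 1) t ht).prodMk (hu i t ht))
      simpa [Function.comp_def, hF] using this
    have hG : HasDerivWithinAt
        (fun τ => f i - u i τ - A i (u i τ) (u (i + 1) τ)
          + A (i - 1) (u (i - 1) τ) (u i τ)) (D i t) (Set.Ici 0) t := by
      have := (((hasDerivWithinAt_const t (Set.Ici (0:ℝ)) (f i)).sub (hu i t ht)).sub
        hA_t).add hB_t
      refine this.congr_deriv ?_
      rw [hD]; ring
    exact hG.congr (fun τ hτ => hGeq i hi τ hτ) (hGeq i hi t ht)
  -- the max of positive parts
  set m : ℝ → ℝ := fun τ => s.sup' hne (fun j => max (u' j τ) 0) with hm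
  have hm_nonneg : ∀ τ, 0 ≤ m τ := by
    intro τ
    exact le_trans (le_max_right (u' 1 τ) 0)
      (Finset.le_sup' (f := fun j => max (u' j τ) 0) h1s)
  have hm_ge : ∀ j ∈ s, ∀ τ, u' j τ ≤ m τ := by
    intro j hj τ
    exact le_trans (le_max_left _ _)
      (Finset.le_sup' (f := fun j => max (u' j τ) 0) hj)
  have hm_cont : ContinuousOn m (Set.Ici 0) :=
    ContinuousOn.finset_sup'_apply hne (fun j _ => (hu' j).sup continuousOn_const)
  have hm0 : m 0 = 0 := by
    refine le_antisymm (Finset.sup'_le hne _ fun j hj => ?_) (hm_nonneg 0)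
    have h1 := hode j hj 0 le_rfl
    have h2 := hsup j hj
    have : u' j 0 ≤ 0 := by linarith
    exact max_le this le_rfl
  -- main argument
  intro t₀ ht₀ i hi
  set b : ℝ := t₀ + 1 with hb
  -- the coefficient function and its bound K
  set φ : ℕ → ℝ → ℝ := fun j τ =>
    (fderiv ℝ (F (j - 1)) (u (j - 1) τ, u j τ)) ((1 : ℝ), (0 : ℝ))
      - (fderiv ℝ (F j) (u j τ, u (j + 1) τ)) ((0 : ℝ), (1 : ℝ)) with hφ
  have cu : ∀ j, ContinuousOn (u j) (Set.Ici 0) :=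
    fun j τ hτ => (hu j τ hτ).continuousWithinAt
  have hφ_cont : ∀ j, ContinuousOn (φ j) (Set.Ici 0) := by
    intro j
    have c1 : ContinuousOn (fun τ => fderiv ℝ (F (j - 1)) (u (j - 1) τ, u j τ))
        (Set.Ici 0) :=
      ((hAC1 (j - 1)).continuous_fderiv one_ne_zero).comp_continuousOn
        ((cu (j - 1)).prodMk (cu j))
    have c2 : ContinuousOn (fun τ => fderiv ℝ (F j) (u j τ, u (j + 1) τ))
        (Set.Ici 0) :=
      ((hAC1 j).continuous_fderiv one_ne_zero).comp_continuousOn ((cu j).prodMk (cu (j + 1)))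
    exact (c1.clm_apply continuousOn_const).sub (c2.clm_apply continuousOn_const)
  have hΦ_cont : ContinuousOn (fun τ => s.sup' hne (fun j => φ j τ)) (Set.Icc 0 b) :=
    (ContinuousOn.finset_sup'_apply hne fun j _ => hφ_cont j).mono Icc_subset_Ici_self
  obtain ⟨C, hC⟩ := isCompact_Icc.exists_bound_of_continuousOn hΦ_cont
  set K : ℝ := max C 0 with hK
  have hK0 : 0 ≤ K := le_max_right C 0
  have hφK : ∀ j ∈ s, ∀ τ ∈ Set.Icc (0:ℝ) b, φ j τ ≤ K := by
    intro j hj τ hτ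
    calc φ j τ ≤ s.sup' hne (fun j' => φ j' τ) := Finset.le_sup' (f := fun j' => φ j' τ) hj
      _ ≤ |s.sup' hne (fun j' => φ j' τ)| := le_abs_self _
      _ ≤ C := hC τ hτ
      _ ≤ K := le_max_left C 0
  -- key estimate at active indices
  have key : ∀ τ ∈ Set.Icc (0:ℝ) b, ∀ j ∈ s, u' j τ = m τ → D j τ ≤ K * m τ := by
    intro τ hτ j hj hact
    have hj1 : 1 ≤ j := (Finset.mem_Icc.1 hj).1
    have hjI : j ≤ I := (Finset.mem_Icc.1 hj).2
    set a : ℝ := (fderiv ℝ (F j) (u j τ, u (j + 1) τ)) ((1:ℝ), (0:ℝ)) with ha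
    set c : ℝ := (fderiv ℝ (F j) (u j τ, u (j + 1) τ)) ((0:ℝ), (1:ℝ)) with hc
    set d : ℝ := (fderiv ℝ (F (j - 1)) (u (j - 1) τ, u j τ)) ((1:ℝ), (0:ℝ)) with hd
    set e : ℝ := (fderiv ℝ (F (j - 1)) (u (j - 1) τ, u j τ)) ((0:ℝ), (1:ℝ)) with he
    have hDval : D j τ = -(1 + a - e) * m τ + (-c) * u' (j + 1) τ + d * u' (j - 1) τ := by
      rw [hD]
      simp only
      rw [clm_expand (fderiv ℝ (F j) (u j τ, u (j + 1) τ)) (u' j τ) (u' (j + 1) τ),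
        clm_expand (fderiv ℝ (F (j - 1)) (u (j - 1) τ, u j τ)) (u' (j - 1) τ) (u' j τ),
        ← ha, ← hc, ← hd, ← he, hact]
      ring
    have ha0 : 0 ≤ a := hsgn1 j _ _
    have hc0 : c ≤ 0 := hsgn2 j _ _
    have hd0 : 0 ≤ d := hsgn1 (j - 1) _ _
    have he0 : e ≤ 0 := hsgn2 (j - 1) _ _
    have hterm2 : (-c) * u' (j + 1) τ ≤ (-c) * m τ := by
      rcases lt_or_eq_of_le hjI with hlt | heq
      · have hmem : j + 1 ∈ s := by simp [hs, Finset.mem_Icc]; omega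
        exact mul_le_mul_of_nonneg_left (hm_ge _ hmem τ) (by linarith)
      · have : c = 0 := by rw [hc, heq, hFI]; simp
        simp [this]
    have hterm3 : d * u' (j - 1) τ ≤ d * m τ := by
      rcases lt_or_eq_of_le hj1 with hlt | heq
      · have hmem : j - 1 ∈ s := by simp [hs, Finset.mem_Icc]; omega
        exact mul_le_mul_of_nonneg_left (hm_ge _ hmem τ) hd0
      · have : d = 0 := by rw [hd, ← heq]; simp [hF0]
        simp [this]
    have hterm1 : -(1 + a - e) * m τ ≤ 0 := by
      have h1 : 0 ≤ (1 + a - e) * m τ := mul_nonneg (by linarith) (hm_nonneg τ)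
      linarith
    have hφval : φ j τ = d - c := by rw [hφ]
    have hφle : d - c ≤ K := hφval ▸ hφK j hj τ hτ
    calc D j τ = -(1 + a - e) * m τ + (-c) * u' (j + 1) τ + d * u' (j - 1) τ := hDval
      _ ≤ 0 + (-c) * m τ + d * m τ := by linarith
      _ = (d - c) * m τ := by ring
      _ ≤ K * m τ := mul_le_mul_of_nonneg_right hφle (hm_nonneg τ)
  -- Gronwall
  have hgron : ∀ x ∈ Set.Icc (0:ℝ) b, m x ≤ gronwallBound 0 K 0 (x - 0) := by
    refine le_gronwallBound_of_liminf_deriv_right_le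
      (f' := fun τ => K * m τ) (hm_cont.mono Icc_subset_Ici_self) ?_ (le_of_eq hm0) ?_
    · -- liminf condition
      intro t ht r hr
      have ht0 : (0:ℝ) ≤ t := ht.1
      have hr0 : 0 < r := lt_of_le_of_lt (mul_nonneg hK0 (hm_nonneg t)) hr
      have hev_gt : ∀ᶠ z in 𝓝[>] t, t < z := eventually_mem_nhdsWithin
      have hIoi_sub : Set.Ioi t ⊆ Set.Ici (0:ℝ) := fun z hz => le_trans ht0 (le_of_lt hz)
      by_cases hz : ∃ᶠ z in 𝓝[>] t, m z = 0
      · refine (hz.and_eventually hev_gt).mono ?_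
        rintro z ⟨hz0, hzt⟩
        have h1 : (z - t)⁻¹ * (m z - m t) ≤ 0 := by
          rw [hz0]
          have := hm_nonneg t
          have hinv : 0 ≤ (z - t)⁻¹ := inv_nonneg.2 (by linarith)
          nlinarith
        linarith
      · rw [not_frequently] at hz
        have hev : ∀ᶠ z in 𝓝[>] t, ∃ j ∈ s, u' j z = m z := by
          refine (hz.and hev_gt).mono ?_
          rintro z ⟨hz0, _⟩
          obtain ⟨j, hj, hjs⟩ := Finset.exists_mem_eq_sup' hne (fun j => max (u' j z) 0)
          refine ⟨j, hj, ?_⟩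
          have hmz : m z = max (u' j z) 0 := hjs
          rcases le_or_gt (u' j z) 0 with h | h
          · exact absurd (by rw [hmz, max_eq_right h]) hz0
          · rw [hmz, max_eq_left h.le]
        obtain ⟨j, hj, hfreq⟩ := freq_of_eventually_exists hev
        rcases eq_or_lt_of_le (hm_ge j hj t) with hact | hlt
        · -- j is active at t
          have hDle : D j t ≤ K * m t := key t ⟨ht0, ht.2.le⟩ j hj hact
          have hDlt : D j t < r := lt_of_le_of_lt hDle hr
          have hder : HasDerivWithinAt (u' j) (D j t) (Set.Ioi t) t :=
            (hDerivD j hj t ht0).mono hIoi_sub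
          have hslope : Tendsto (slope (u' j) t) (𝓝[>] t) (𝓝 (D j t)) := by
            rwa [hasDerivWithinAt_iff_tendsto_slope' (notMem_Ioi.2 le_rfl)] at hder
          have hev2 : ∀ᶠ z in 𝓝[>] t, slope (u' j) t z < r :=
            hslope.eventually_lt_const hDlt
          refine (hfreq.and_eventually (hev2.and hev_gt)).mono ?_
          rintro z ⟨hjz, hsl, hzt⟩
          have : (z - t)⁻¹ * (m z - m t) = slope (u' j) t z := by
            rw [slope_def_field, div_eq_inv_mul, hjz, hact]
          rw [this]; exact hsl
        · -- j is inactive at t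
          have hcont : Tendsto (u' j) (𝓝[>] t) (𝓝 (u' j t)) :=
            ((hu' j) t ht0).tendsto.mono_left (nhdsWithin_mono t hIoi_sub)
          have hev2 : ∀ᶠ z in 𝓝[>] t, u' j z < m t := hcont.eventually_lt_const hlt
          refine (hfreq.and_eventually (hev2.and hev_gt)).mono ?_
          rintro z ⟨hjz, hlt2, hzt⟩
          have h1 : (z - t)⁻¹ * (m z - m t) ≤ 0 := by
            have hinv : 0 ≤ (z - t)⁻¹ := inv_nonneg.2 (by linarith)
            have : m z - m t ≤ 0 := by rw [← hjz]; linarith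
            exact mul_nonpos_of_nonneg_of_nonpos hinv this
          linarith
    · -- bound
      intro x _
      simp
  have hmt₀ : m t₀ ≤ 0 := by
    have := hgron t₀ ⟨ht₀, by linarith⟩
    rwa [sub_zero, gronwallBound_ε0_δ0] at this
  exact le_trans (hm_ge i hi t₀) hmt₀

/-- the monotone dynamics `du/dt + S(u) = f` preserve super- and
subsolutions, and the solution started from a supersolution (resp. subsolution)
is componentwise nonincreasing (resp. nondecreasing) in time. -/
theorem monotone_dynamics_preserves_super_and_subsolutions
    (I : ℕ) (hI : 1 ≤ I)
    (A : ℕ → ℝ → ℝ → ℝ) (f : ℕ → ℝ)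
    (hA0 : ∀ x y : ℝ, A 0 x y = 0) (hAI : ∀ x y : ℝ, A I x y = 0)
    (hAC1 : ∀ i, ContDiff ℝ 1 (fun p : ℝ × ℝ => A i p.1 p.2))
    (hA1 : ∀ i (x y : ℝ), 0 ≤ deriv (fun s => A i s y) x)
    (hA2 : ∀ i (x y : ℝ), deriv (fun s => A i x s) y ≤ 0)
    (u u' : ℕ → ℝ → ℝ)
    (hu : ∀ i, ∀ t : ℝ, 0 ≤ t → HasDerivWithinAt (u i) (u' i t) (Set.Ici 0) t)
    (hu' : ∀ i, ContinuousOn (u' i) (Set.Ici 0))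
    (hode : ∀ i ∈ Finset.Icc 1 I, ∀ t : ℝ, 0 ≤ t →
      u' i t + u i t + A i (u i t) (u (i + 1) t) - A (i - 1) (u (i - 1) t) (u i t)
        = f i) :
    ((∀ i ∈ Finset.Icc 1 I,
        u i 0 + A i (u i 0) (u (i + 1) 0) - A (i - 1) (u (i - 1) 0) (u i 0) ≥ f i) →
      (∀ i ∈ Finset.Icc 1 I, AntitoneOn (u i) (Set.Ici 0))
      ∧ (∀ t : ℝ, 0 ≤ t → ∀ i ∈ Finset.Icc 1 I,
          u i t + A i (u i t) (u (i + 1) t) - A (i - 1) (u (i - 1) t) (u i t) ≥ f i))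
    ∧ ((∀ i ∈ Finset.Icc 1 I,
        u i 0 + A i (u i 0) (u (i + 1) 0) - A (i - 1) (u (i - 1) 0) (u i 0) ≤ f i) →
      (∀ i ∈ Finset.Icc 1 I, MonotoneOn (u i) (Set.Ici 0))
      ∧ (∀ t : ℝ, 0 ≤ t → ∀ i ∈ Finset.Icc 1 I,
          u i t + A i (u i t) (u (i + 1) t) - A (i - 1) (u (i - 1) t) (u i t) ≤ f i)) := by
  have hucont : ∀ i, ContinuousOn (u i) (Set.Ici 0) :=
    fun i x hx => (hu i x hx).continuousWithinAt
  constructor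
  · -- supersolution case
    intro hsup
    have hle : ∀ t : ℝ, 0 ≤ t → ∀ i ∈ Finset.Icc 1 I, u' i t ≤ 0 :=
      core_nonpos I hI A f hA0 hAI hAC1 hA1 hA2 u u' hu hu' hode hsup
    constructor
    · intro i hi
      apply antitoneOn_of_deriv_nonpos (convex_Ici 0) (hucont i)
      · rw [interior_Ici]
        intro x hx
        exact ((hu i x (le_of_lt hx)).hasDerivAt
          (Ici_mem_nhds hx)).differentiableAt.differentiableWithinAt
      · rw [interior_Ici]
        intro x hx
        rw [((hu i x (le_of_lt hx)).hasDerivAt (Ici_mem_nhds hx)).deriv]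
        exact hle x (le_of_lt hx) i hi
    · intro t ht i hi
      have h1 := hode i hi t ht
      have h2 := hle t ht i hi
      linarith
  · -- subsolution case: apply core_nonpos to the reflected system
    intro hsub
    set B : ℕ → ℝ → ℝ → ℝ := fun i x y => -(A i (-x) (-y)) with hB
    have hB0 : ∀ x y : ℝ, B 0 x y = 0 := by intro x y; simp [hB, hA0]
    have hBI : ∀ x y : ℝ, B I x y = 0 := by intro x y; simp [hB, hAI]
    have hBC1 : ∀ i, ContDiff ℝ 1 (fun p : ℝ × ℝ => B i p.1 p.2) := by
      intro i
      have hneg : ContDiff ℝ 1 (fun p : ℝ × ℝ => ((-p.1, -p.2) : ℝ × ℝ)) :=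
        (contDiff_fst.neg).prodMk (contDiff_snd.neg)
      have := ((hAC1 i).comp hneg).neg
      simpa [Function.comp, hB] using this
    have hB1 : ∀ i (x y : ℝ), 0 ≤ deriv (fun s => B i s y) x := by
      intro i x y
      have hA' := hasDerivAt_partial1 (hAC1 i) (-x) (-y)
      have hneg : HasDerivAt (fun s : ℝ => -s) (-1) x := (hasDerivAt_id x).neg
      have hcomp := hA'.comp x hneg
      have hfin := hcomp.neg
      have hd : deriv (fun s => B i s y) x
          = -(fderiv ℝ (fun p : ℝ × ℝ => A i p.1 p.2) (-x, -y) ((1:ℝ), (0:ℝ)) * -1) := by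
        have : (fun s => B i s y) = fun s => -(((fun s => A i s (-y)) ∘ fun s : ℝ => -s) s) := by
          funext s; simp [hB, Function.comp]
        rw [this]
        exact hfin.deriv
      rw [hd]
      have h1 : 0 ≤ fderiv ℝ (fun p : ℝ × ℝ => A i p.1 p.2) (-x, -y) ((1:ℝ), (0:ℝ)) := by
        rw [← (hasDerivAt_partial1 (hAC1 i) (-x) (-y)).deriv]
        exact hA1 i (-x) (-y)
      linarith
    have hB2 : ∀ i (x y : ℝ), deriv (fun s => B i x s) y ≤ 0 := by
      intro i x y
      have hA' := hasDerivAt_partial2 (hAC1 i) (-x) (-y)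
      have hneg : HasDerivAt (fun s : ℝ => -s) (-1) y := (hasDerivAt_id y).neg
      have hcomp := hA'.comp y hneg
      have hfin := hcomp.neg
      have hd : deriv (fun s => B i x s) y
          = -(fderiv ℝ (fun p : ℝ × ℝ => A i p.1 p.2) (-x, -y) ((0:ℝ), (1:ℝ)) * -1) := by
        have : (fun s => B i x s) = fun s => -(((fun s => A i (-x) s) ∘ fun s : ℝ => -s) s) := by
          funext s; simp [hB, Function.comp]
        rw [this]
        exact hfin.deriv
      rw [hd]
      have h2 : fderiv ℝ (fun p : ℝ × ℝ => A i p.1 p.2) (-x, -y) ((0:ℝ), (1:ℝ)) ≤ 0 := by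
        rw [← (hasDerivAt_partial2 (hAC1 i) (-x) (-y)).deriv]
        exact hA2 i (-x) (-y)
      linarith
    have hvode : ∀ i ∈ Finset.Icc 1 I, ∀ t : ℝ, 0 ≤ t →
        (fun i t => -(u' i t)) i t + (fun i t => -(u i t)) i t
          + B i ((fun i t => -(u i t)) i t) ((fun i t => -(u i t)) (i + 1) t)
          - B (i - 1) ((fun i t => -(u i t)) (i - 1) t) ((fun i t => -(u i t)) i t)
          = (fun i => -(f i)) i := by
      intro i hi t ht
      have := hode i hi t ht
      simp only [hB, neg_neg]
      linarith
    have hvsup : ∀ i ∈ Finset.Icc 1 I,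
        (fun i t => -(u i t)) i 0
          + B i ((fun i t => -(u i t)) i 0) ((fun i t => -(u i t)) (i + 1) 0)
          - B (i - 1) ((fun i t => -(u i t)) (i - 1) 0) ((fun i t => -(u i t)) i 0)
          ≥ (fun i => -(f i)) i := by
      intro i hi
      have := hsub i hi
      simp only [hB, neg_neg]
      linarith
    have hge : ∀ t : ℝ, 0 ≤ t → ∀ i ∈ Finset.Icc 1 I, 0 ≤ u' i t := by
      intro t ht i hi
      have := core_nonpos I hI B (fun i => -(f i)) hB0 hBI hBC1 hB1 hB2
        (fun i t => -(u i t)) (fun i t => -(u' i t))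
        (fun i t ht => (hu i t ht).neg) (fun i => (hu' i).neg)
        hvode hvsup t ht i hi
      have h3 : -u' i t ≤ 0 := this
      linarith
    constructor
    · intro i hi
      apply monotoneOn_of_deriv_nonneg (convex_Ici 0) (hucont i)
      · rw [interior_Ici]
        intro x hx
        exact ((hu i x (le_of_lt hx)).hasDerivAt
          (Ici_mem_nhds hx)).differentiableAt.differentiableWithinAt
      · rw [interior_Ici]
        intro x hx
        rw [((hu i x (le_of_lt hx)).hasDerivAt (Ici_mem_nhds hx)).deriv]
        exact hge x (le_of_lt hx) i hi
    · intro t ht i hi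
      have h1 := hode i hi t ht
      have h2 := hge t ht i hi
      linarith
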